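/- The hypercube graph Q_r ({0,1}^r with edges between vectors differing in exactly one coordinate) is r-connected but not (r+1)-connected. -/

import Mathlib

/-- The hypercube graph `Q_r`: vertices are `{0,1}^r`, with edges between vectors
differing in exactly one coordinate. -/
def cubeGraph (r : ℕ) : SimpleGraph (Fin r → Bool) :=
  SimpleGraph.fromRel
    (fun x y => (Finset.univ.filter fun i => x i ≠ y i).card = 1)

open Finset

lemma cube_adj {r : ℕ} {x y : Fin r → Bool} :
    (cubeGraph r).Adj x y ↔ (Finset.univ.filter fun i => x i ≠ y i).card = 1 := by
  unfold cubeGraph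
  rw [SimpleGraph.fromRel_adj]
  have hsymm : (univ.filter fun i => y i ≠ x i) = (univ.filter fun i => x i ≠ y i) := by
    apply filter_congr; intro i _; simp [ne_comm]
  constructor
  · rintro ⟨hne, h | h⟩
    · exact h
    · rwa [hsymm] at h
  · intro h
    refine ⟨?_, Or.inl h⟩
    rintro rfl
    simp at h

lemma snoc_filter_card {r : ℕ} (u v : Fin r → Bool) (b c : Bool) :
    (Finset.univ.filter fun i : Fin (r+1) =>
        (Fin.snoc u b : Fin (r+1) → Bool) i ≠ (Fin.snoc v c : Fin (r+1) → Bool) i).card =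
      (Finset.univ.filter fun i => u i ≠ v i).card + (if b ≠ c then 1 else 0) := by
  rw [Finset.card_filter, Finset.card_filter, Fin.sum_univ_castSucc]
  simp [Fin.snoc_castSucc, Fin.snoc_last]

lemma cube_adj_snoc {r : ℕ} {u v : Fin r → Bool} (b : Bool) :
    (cubeGraph (r+1)).Adj (Fin.snoc u b) (Fin.snoc v b) ↔ (cubeGraph r).Adj u v := by
  rw [cube_adj, cube_adj, snoc_filter_card]
  simp

lemma cube_adj_cross {r : ℕ} (u : Fin r → Bool) (b : Bool) :
    (cubeGraph (r+1)).Adj (Fin.snoc u b) (Fin.snoc u (!b)) := by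
  rw [cube_adj, snoc_filter_card]
  simp

/-- A relation: step along an edge of the cube staying outside `s`. -/
def relA (r : ℕ) (s : Finset (Fin r → Bool)) (a b : Fin r → Bool) : Prop :=
  (cubeGraph r).Adj a b ∧ a ∉ s ∧ b ∉ s

lemma relA_symm {r s} : Symmetric (relA r s) := by
  rintro a b ⟨h1, h2, h3⟩; exact ⟨h1.symm, h3, h2⟩

abbrev RR (r : ℕ) (s : Finset (Fin r → Bool)) := Relation.ReflTransGen (relA r s)

lemma RR_symm {r s} {a b} (h : RR r s a b) : RR r s b a :=
  by haveI : Std.Symm (relA r s) := ⟨fun a b h => relA_symm h⟩; exact Std.Symm.symm _ _ h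

lemma RR_lift {r : ℕ} {s : Finset (Fin (r+1) → Bool)} (b : Bool)
    {u v : Fin r → Bool}
    (h : RR r (Finset.univ.filter fun w => (Fin.snoc w b : Fin (r+1) → Bool) ∈ s) u v) :
    RR (r+1) s (Fin.snoc u b) (Fin.snoc v b) := by
  refine Relation.ReflTransGen.lift (fun w => (Fin.snoc w b : Fin (r+1) → Bool)) ?_ _ _ h
  rintro a c ⟨h1, h2, h3⟩
  refine ⟨(cube_adj_snoc b).2 h1, ?_, ?_⟩
  · simpa using h2
  · simpa using h3

lemma key : ∀ (r : ℕ) (s : Finset (Fin r → Bool)), s.card < r →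
    ∀ x y, x ∉ s → y ∉ s → RR r s x y := by
  intro r
  induction r with
  | zero => intro s hs; exact absurd hs (by omega)
  | succ r ih =>
    intro s hs x y hx hy
    set t : Bool → Finset (Fin r → Bool) :=
      fun b => Finset.univ.filter fun w => (Fin.snoc w b : Fin (r+1) → Bool) ∈ s with ht
    have hmem : ∀ (b : Bool) (w : Fin r → Bool), w ∈ t b ↔ (Fin.snoc w b : Fin (r+1) → Bool) ∈ s := by
      intro b w; simp [ht]
    have hsnoc_inj : ∀ b : Bool, Function.Injective (fun w : Fin r → Bool => (Fin.snoc w b : Fin (r+1) → Bool)) := by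
      intro b w1 w2 h
      have := congrArg Fin.init h
      simpa [Fin.init_snoc] using this
    have hcard : (t false).card + (t true).card ≤ s.card := by
      have himg : ∀ b : Bool, ((t b).image fun w => (Fin.snoc w b : Fin (r+1) → Bool)) ⊆ s := by
        intro b z hz
        obtain ⟨w, hw, rfl⟩ := Finset.mem_image.1 hz
        exact (hmem b w).1 hw
      have hdisj : Disjoint ((t false).image fun w => (Fin.snoc w false : Fin (r+1) → Bool))
          ((t true).image fun w => (Fin.snoc w true : Fin (r+1) → Bool)) := by
        rw [Finset.disjoint_left]
        rintro z hz0 hz1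
        obtain ⟨w0, _, rfl⟩ := Finset.mem_image.1 hz0
        obtain ⟨w1, _, h⟩ := Finset.mem_image.1 hz1
        have := congrFun h (Fin.last r)
        simp [Fin.snoc_last] at this
      calc (t false).card + (t true).card
          = ((t false).image fun w => (Fin.snoc w false : Fin (r+1) → Bool)).card
            + ((t true).image fun w => (Fin.snoc w true : Fin (r+1) → Bool)).card := by
            rw [Finset.card_image_of_injective _ (hsnoc_inj false),
              Finset.card_image_of_injective _ (hsnoc_inj true)]
        _ = (((t false).image fun w => (Fin.snoc w false : Fin (r+1) → Bool))
            ∪ ((t true).image fun w => (Fin.snoc w true : Fin (r+1) → Bool))).card :=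
            (Finset.card_union_of_disjoint hdisj).symm
        _ ≤ s.card := Finset.card_le_card (Finset.union_subset (himg false) (himg true))
    rcases Nat.eq_zero_or_pos r with hr0 | hr0
    · -- r = 0 : the cube Q₁, s is empty
      subst hr0
      have hse : s = ∅ := Finset.card_eq_zero.1 (by omega)
      subst hse
      by_cases hxy : x = y
      · subst hxy; exact Relation.ReflTransGen.refl
      · refine Relation.ReflTransGen.single ⟨?_, by simp, by simp⟩
        rw [cube_adj]
        have hne : ∀ i : Fin 1, x i ≠ y i := by
          intro i
          intro h
          apply hxy
          funext j
          have hj : j = i := by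
            apply Fin.ext
            have := j.isLt; have := i.isLt
            omega
          rw [hj, h]
        rw [Finset.filter_eq_self.2 fun i _ => hne i]
        simp
    -- now r ≥ 1
    have half : ∀ b : Bool, (t b).card < r → ∀ u v, u ∉ t b → v ∉ t b →
        RR (r+1) s (Fin.snoc u b) (Fin.snoc v b) := by
      intro b hb u v hu hv
      exact RR_lift b (ih (t b) hb u v hu hv)
    have intact : ∀ b : Bool, t b = ∅ → RR (r+1) s x y := by
      intro b htb
      have reach : ∀ z, z ∉ s → ∃ w, RR (r+1) s z (Fin.snoc w b) := by
        intro z hz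
        by_cases hzb : z (Fin.last r) = b
        · refine ⟨Fin.init z, ?_⟩
          have hzeq : (Fin.snoc (Fin.init z) b : Fin (r+1) → Bool) = z := by
            rw [← hzb, Fin.snoc_init_self]
          rw [hzeq]
        · refine ⟨Fin.init z, Relation.ReflTransGen.single ⟨?_, hz, ?_⟩⟩
          · have hzb' : z (Fin.last r) = !b := by
              cases b <;> simp_all
            have hzeq : (Fin.snoc (Fin.init z) (!b) : Fin (r+1) → Bool) = z := by
              rw [← hzb', Fin.snoc_init_self]
            have h2 := cube_adj_cross (Fin.init z) (!b)
            rw [Bool.not_not] at h2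
            rwa [hzeq] at h2
          · intro hmem'
            have : Fin.init z ∈ t b := (hmem b (Fin.init z)).2 hmem'
            simp [htb] at this
      obtain ⟨wx, hwx⟩ := reach x hx
      obtain ⟨wy, hwy⟩ := reach y hy
      have hmid : RR (r+1) s (Fin.snoc wx b) (Fin.snoc wy b) := by
        apply half b (by rw [htb]; simpa using hr0) <;> simp [htb]
      exact (hwx.trans hmid).trans (RR_symm hwy)
    by_cases h0 : (t false).card < r
    · by_cases h1 : (t true).card < r
      · -- both halves have < r deleted vertices; find a bridge column u
        have hlt : ((t false) ∪ (t true)).card < Fintype.card (Fin r → Bool) := by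
          calc ((t false) ∪ (t true)).card ≤ (t false).card + (t true).card :=
                Finset.card_union_le _ _
            _ ≤ s.card := hcard
            _ ≤ r := by omega
            _ < 2 ^ r := Nat.lt_two_pow_self
            _ = Fintype.card (Fin r → Bool) := by simp
        obtain ⟨u, hu⟩ : ∃ u, u ∉ (t false) ∪ (t true) := by
          by_contra hcon
          push_neg at hcon
          have : Finset.univ ⊆ (t false) ∪ (t true) := fun w _ => hcon w
          have := Finset.card_le_card this
          rw [Finset.card_univ] at this
          omega
        have hu0 : u ∉ t false := fun h => hu (Finset.mem_union_left _ h)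
        have hu1 : u ∉ t true := fun h => hu (Finset.mem_union_right _ h)
        have hus : ∀ b : Bool, (Fin.snoc u b : Fin (r+1) → Bool) ∉ s := by
          intro b hmem'
          cases b
          · exact hu0 ((hmem false u).2 hmem')
          · exact hu1 ((hmem true u).2 hmem')
        have reach : ∀ z, z ∉ s → RR (r+1) s z (Fin.snoc u false) := by
          intro z hz
          have hinit : Fin.init z ∉ t (z (Fin.last r)) := by
            intro hmem'
            have := (hmem (z (Fin.last r)) (Fin.init z)).1 hmem'
            rw [Fin.snoc_init_self] at this
            exact hz this
          have hcardb : ∀ b : Bool, (t b).card < r := by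
            intro b; cases b
            · exact h0
            · exact h1
          have hub : u ∉ t (z (Fin.last r)) := by
            cases hzl : z (Fin.last r)
            · exact hu0
            · exact hu1
          have hstep : RR (r+1) s z (Fin.snoc u (z (Fin.last r))) := by
            conv_lhs => rw [← Fin.snoc_init_self z]
            exact half _ (hcardb _) _ _ hinit hub
          cases hzl : z (Fin.last r) with
          | false => rw [hzl] at hstep; exact hstep
          | true =>
            rw [hzl] at hstep
            refine hstep.tail ⟨?_, hus true, hus false⟩
            have := cube_adj_cross u true
            simpa using this
        exact (reach x hx).trans (RR_symm (reach y hy))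
      ·
        have : (t false).card = 0 := by omega
        exact intact false (Finset.card_eq_zero.1 this)
    · have : (t true).card = 0 := by omega
      exact intact true (Finset.card_eq_zero.1 this)

lemma reachable_cases {V : Type*} {G : SimpleGraph V} {a b : V} (h : G.Reachable a b) :
    a = b ∨ ∃ c, G.Adj a c := by
  obtain ⟨p⟩ := h
  cases p with
  | nil => exact Or.inl rfl
  | cons h q => exact Or.inr ⟨_, h⟩

lemma RR_reachable {r : ℕ} {s : Finset (Fin r → Bool)} {a b : Fin r → Bool}
    (h : RR r s a b) :
    ∀ (ha : a ∈ (((⊤ : (cubeGraph r).Subgraph).deleteVerts ↑s).verts))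
      (hb : b ∈ (((⊤ : (cubeGraph r).Subgraph).deleteVerts ↑s).verts)),
      (((⊤ : (cubeGraph r).Subgraph).deleteVerts ↑s).coe).Reachable ⟨a, ha⟩ ⟨b, hb⟩ := by
  induction h with
  | refl => intro ha hb; rfl
  | @tail c d h1 h2 ih =>
    intro ha hd
    have hc : c ∈ (((⊤ : (cubeGraph r).Subgraph).deleteVerts ↑s).verts) := by
      simp [h2.2.1]
    refine (ih ha hc).trans ?_
    apply SimpleGraph.Adj.reachable
    simp only [SimpleGraph.Subgraph.coe_adj, SimpleGraph.Subgraph.deleteVerts_adj]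
    refine ⟨by trivial, by simpa using h2.2.1, by trivial, by simpa using h2.2.2, by simpa using h2.1⟩

/-- A graph is `k`-connected if it has at least `k+1` vertices and cannot be
disconnected by removing fewer than `k` vertices. -/
def IsKConnected {V : Type*} [Fintype V] (G : SimpleGraph V) (k : ℕ) : Prop :=
  k + 1 ≤ Fintype.card V ∧
    ∀ s : Finset V, s.card < k → ((⊤ : G.Subgraph).deleteVerts ↑s).coe.Connected

/-- The hypercube graph `Q_r` is `r`-connected but not `(r+1)`-connected. -/
theorem cubeGraph_connectivity (r : ℕ) :
    IsKConnected (cubeGraph r) r ∧ ¬ IsKConnected (cubeGraph r) (r + 1) := by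
  have hcardV : Fintype.card (Fin r → Bool) = 2 ^ r := by simp
  constructor
  · constructor
    · rw [hcardV]; exact Nat.succ_le_of_lt (Nat.lt_two_pow_self)
    · intro s hs
      obtain ⟨x0, hx0⟩ : ∃ x, x ∉ s := by
        by_contra hcon
        push_neg at hcon
        have : Finset.univ ⊆ s := fun w _ => hcon w
        have := Finset.card_le_card this
        rw [Finset.card_univ, hcardV] at this
        have := Nat.lt_two_pow_self (n := r)
        omega
      rw [SimpleGraph.connected_iff]
      constructor
      · rintro ⟨a, ha⟩ ⟨b, hb⟩
        have ha' : a ∉ s := by simp at ha; exact ha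
        have hb' : b ∉ s := by simp at hb; exact hb
        exact RR_reachable (key r s hs a b ha' hb') ha hb
      · exact ⟨⟨x0, by simp [hx0]⟩⟩
  · rintro ⟨hcard, hconn⟩
    classical
    rw [hcardV] at hcard
    rcases Nat.lt_or_ge r 2 with hr | hr
    · interval_cases r <;> omega
    -- r ≥ 2 : delete the neighbors of the all-false vertex
    set c0 : Fin r → Bool := fun _ => false with hc0
    set c1 : Fin r → Bool := fun _ => true with hc1
    set s : Finset (Fin r → Bool) := Finset.univ.filter fun x => (cubeGraph r).Adj c0 x with hsdef
    have hssub : s ⊆ Finset.univ.image fun i : Fin r => (fun j => decide (j = i) : Fin r → Bool) := by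
      intro x hx
      rw [hsdef, Finset.mem_filter] at hx
      have hadj := hx.2
      rw [cube_adj] at hadj
      obtain ⟨i, hi⟩ := Finset.card_eq_one.1 hadj
      rw [Finset.mem_image]
      refine ⟨i, Finset.mem_univ i, ?_⟩
      funext j
      by_cases hji : j = i
      · subst hji
        have : j ∈ Finset.univ.filter fun k => c0 k ≠ x k := by rw [hi]; simp
        rw [Finset.mem_filter] at this
        have := this.2
        simp [hc0] at this ⊢
        simp [this]
      · have : j ∉ Finset.univ.filter fun k => c0 k ≠ x k := by rw [hi]; simp [hji]
        rw [Finset.mem_filter] at this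
        push_neg at this
        have := this (Finset.mem_univ j)
        simp [hc0] at this
        simp [hji, this]
    have hscard : s.card ≤ r := by
      calc s.card ≤ (Finset.univ.image fun i : Fin r => (fun j => decide (j = i) : Fin r → Bool)).card :=
            Finset.card_le_card hssub
        _ ≤ (Finset.univ : Finset (Fin r)).card := Finset.card_image_le
        _ = r := by simp
    have hc0s : c0 ∉ s := by
      rw [hsdef, Finset.mem_filter]
      rintro ⟨-, h⟩
      exact (cubeGraph r).irrefl h
    have hc1s : c1 ∉ s := by
      rw [hsdef, Finset.mem_filter]
      rintro ⟨-, h⟩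
      rw [cube_adj] at h
      have : (Finset.univ.filter fun i => c0 i ≠ c1 i) = Finset.univ := by
        apply Finset.filter_eq_self.2
        intro i _
        simp [hc0, hc1]
      rw [this] at h
      simp at h
      omega
    have hconn' := hconn s (by omega)
    have hreach := hconn'.preconnected ⟨c0, by simp [hc0s]⟩ ⟨c1, by simp [hc1s]⟩
    rcases reachable_cases hreach with heq | ⟨⟨c, hcmem⟩, hadj⟩
    · have : c0 = c1 := congrArg Subtype.val heq
      have := congrFun this ⟨0, by omega⟩
      simp [hc0, hc1] at this
    · simp only [SimpleGraph.Subgraph.coe_adj, SimpleGraph.Subgraph.deleteVerts_adj] at hadj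
      obtain ⟨-, -, -, hcs, hadj'⟩ := hadj
      apply hcs
      rw [hsdef]
      simp only [Finset.coe_filter]
      exact ⟨Finset.mem_univ c, by simpa using hadj'⟩
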